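/- Lemma 5.4 (commutator bound): Let φ : [0,∞) → ℝ be Lipschitz with Lipschitz constant C_φ, and let Δ be a finite signed Borel measure on [0,∞) whose total variation satisfies |Δ|([0,∞)) ≤ 2. For ε > 0 define the commutator c^{φ,ε}(x) := ∫₀^∞ φ(y) G_ε(x,y) dΔ(y) − φ(x) ∫₀^∞ G_ε(x,y) dΔ(y). Then there exists a constant C > 0, depending only on C_φ, such that ∫₀^∞ c^{φ,ε}(x)² dx ≤ C√ε for all ε > 0. -/

import Mathlib

open MeasureTheory Set Filter Topology
open scoped ENNReal NNReal

/-- The Gaussian kernel `p_ε(x) = (2πε)^{-1/2} exp(-x²/(2ε))`. -/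
noncomputable def pker (ε x : ℝ) : ℝ :=
  (Real.sqrt (2 * Real.pi * ε))⁻¹ * Real.exp (-(x ^ 2) / (2 * ε))

/-- The Dirichlet heat kernel on the half-line `G_ε(x,y) = p_ε(x-y) - p_ε(x+y)`. -/
noncomputable def Gker (ε x y : ℝ) : ℝ := pker ε (x - y) - pker ε (x + y)

/- ### Auxiliary lemmas -/

lemma cb_sqrt_pos {ε : ℝ} (hε : 0 < ε) : 0 < Real.sqrt (2 * Real.pi * ε) :=
  Real.sqrt_pos.2 (by positivity)

lemma pker_pos {ε : ℝ} (hε : 0 < ε) (x : ℝ) : 0 < pker ε x := by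
  unfold pker
  have := cb_sqrt_pos hε
  positivity

lemma pker_le {ε : ℝ} (hε : 0 < ε) (x : ℝ) :
    pker ε x ≤ (Real.sqrt (2 * Real.pi * ε))⁻¹ := by
  have h1 : Real.exp (-(x ^ 2) / (2 * ε)) ≤ 1 := by
    rw [Real.exp_le_one_iff]
    have : (0:ℝ) ≤ x ^ 2 / (2 * ε) := by positivity
    rw [neg_div]
    linarith
  have h2 : (0:ℝ) < (Real.sqrt (2 * Real.pi * ε))⁻¹ := by
    have := cb_sqrt_pos hε; positivity
  calc pker ε x = (Real.sqrt (2 * Real.pi * ε))⁻¹ * Real.exp (-(x ^ 2) / (2 * ε)) := rfl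
    _ ≤ (Real.sqrt (2 * Real.pi * ε))⁻¹ * 1 := by
        exact mul_le_mul_of_nonneg_left h1 h2.le
    _ = (Real.sqrt (2 * Real.pi * ε))⁻¹ := mul_one _

lemma abs_Gker_le {ε : ℝ} (hε : 0 < ε) (x y : ℝ) :
    |Gker ε x y| ≤ pker ε (x - y) + pker ε (x + y) := by
  rw [Gker]
  refine (abs_sub _ _).trans ?_
  rw [abs_of_pos (pker_pos hε _), abs_of_pos (pker_pos hε _)]

lemma integrable_pker {ε : ℝ} (hε : 0 < ε) : Integrable (pker ε) := by
  have hb : (0:ℝ) < (2*ε)⁻¹ := by positivity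
  have h := (integrable_exp_neg_mul_sq hb).const_mul (Real.sqrt (2 * Real.pi * ε))⁻¹
  refine h.congr (Filter.Eventually.of_forall fun x => ?_)
  unfold pker; ring_nf

lemma integral_pker {ε : ℝ} (hε : 0 < ε) : ∫ x, pker ε x = 1 := by
  have hb : (0:ℝ) < (2*ε)⁻¹ := by positivity
  have h1 : ∫ x, pker ε x
      = (Real.sqrt (2 * Real.pi * ε))⁻¹ * ∫ x, Real.exp (-(2*ε)⁻¹ * x ^ 2) := by
    rw [← MeasureTheory.integral_const_mul]
    refine integral_congr_ae (Filter.Eventually.of_forall fun x => ?_)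
    unfold pker; ring_nf
  rw [h1, integral_gaussian]
  rw [show Real.pi / (2*ε)⁻¹ = 2 * Real.pi * ε by field_simp]
  rw [inv_mul_cancel₀ (cb_sqrt_pos hε).ne']

lemma lintegral_pker {ε : ℝ} (hε : 0 < ε) :
    ∫⁻ x, ENNReal.ofReal (pker ε x) = 1 := by
  rw [← ofReal_integral_eq_lintegral_ofReal (integrable_pker hε)
    (Filter.Eventually.of_forall fun x => (pker_pos hε x).le), integral_pker hε,
    ENNReal.ofReal_one]

lemma lintegral_pker_sub {ε : ℝ} (hε : 0 < ε) (y : ℝ) :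
    ∫⁻ x, ENNReal.ofReal (pker ε (x - y)) = 1 := by
  have h := lintegral_add_right_eq_self (μ := volume) (fun x => ENNReal.ofReal (pker ε x)) (-y)
  simp_rw [← sub_eq_add_neg] at h
  rw [h, lintegral_pker hε]

lemma lintegral_pker_add {ε : ℝ} (hε : 0 < ε) (y : ℝ) :
    ∫⁻ x, ENNReal.ofReal (pker ε (x + y)) = 1 := by
  rw [lintegral_add_right_eq_self (μ := volume) (fun x => ENNReal.ofReal (pker ε x)) y, lintegral_pker hε]

lemma cb_sq_exp {ε : ℝ} (hε : 0 < ε) (u : ℝ) :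
    u ^ 2 * Real.exp (-(u ^ 2) / ε) ≤ ε := by
  set t : ℝ := u ^ 2 / ε with ht
  have ht0 : 0 ≤ t := by positivity
  have h1 : t ≤ Real.exp t := (le_add_of_nonneg_right zero_le_one).trans (Real.add_one_le_exp t)
  have h2 : t * Real.exp (-t) ≤ 1 := by
    rw [Real.exp_neg]
    rw [mul_inv_le_iff₀ (Real.exp_pos t)]
    simpa using h1
  have h3 : u ^ 2 * Real.exp (-(u ^ 2) / ε) = ε * (t * Real.exp (-t)) := by
    rw [neg_div, ht]
    field_simp
  rw [h3]
  calc ε * (t * Real.exp (-t)) ≤ ε * 1 := mul_le_mul_of_nonneg_left h2 hε.le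
    _ = ε := mul_one ε

lemma cb_sq_pker {ε : ℝ} (hε : 0 < ε) (u : ℝ) :
    u ^ 2 * (pker ε u) ^ 2
      ≤ 2 * ε * (Real.sqrt (2 * Real.pi * ε))⁻¹ * pker ε u := by
  have h2ε : (0:ℝ) < 2 * ε := by linarith
  have hE2 : u ^ 2 * Real.exp (-(u ^ 2) / (2 * ε)) ≤ 2 * ε := cb_sq_exp h2ε u
  set A : ℝ := (Real.sqrt (2 * Real.pi * ε))⁻¹ with hA
  set E : ℝ := Real.exp (-(u ^ 2) / (2 * ε)) with hE
  have hApos : 0 < A := by rw [hA]; have := cb_sqrt_pos hε; positivity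
  have hEpos : 0 < E := Real.exp_pos _
  have key := mul_le_mul_of_nonneg_right hE2 (show (0:ℝ) ≤ A ^ 2 * E by positivity)
  calc u ^ 2 * (pker ε u) ^ 2 = (u ^ 2 * E) * (A ^ 2 * E) := by unfold pker; rw [← hA, ← hE]; ring
    _ ≤ (2 * ε) * (A ^ 2 * E) := key
    _ = 2 * ε * A * pker ε u := by unfold pker; rw [← hA, ← hE]; ring

lemma cb_abs_pker {ε : ℝ} (hε : 0 < ε) (u : ℝ) :
    |u| * pker ε u ≤ Real.sqrt (2 * ε) * (Real.sqrt (2 * Real.pi * ε))⁻¹ := by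
  set A : ℝ := (Real.sqrt (2 * Real.pi * ε))⁻¹ with hA
  have hApos : 0 < A := by rw [hA]; have := cb_sqrt_pos hε; positivity
  have hp := pker_pos hε u
  have h1 : (|u| * pker ε u) ^ 2 ≤ (Real.sqrt (2 * ε) * A) ^ 2 := by
    have h2 := cb_sq_pker hε u
    have h3 : pker ε u ≤ A := pker_le hε u
    have h4 : (Real.sqrt (2 * ε)) ^ 2 = 2 * ε := Real.sq_sqrt (by linarith)
    calc (|u| * pker ε u) ^ 2 = u ^ 2 * (pker ε u) ^ 2 := by rw [mul_pow, sq_abs]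
      _ ≤ 2 * ε * A * pker ε u := h2
      _ ≤ 2 * ε * A * A := by
          refine mul_le_mul_of_nonneg_left h3 ?_
          positivity
      _ = (Real.sqrt (2 * ε) * A) ^ 2 := by rw [mul_pow, h4]; ring
  have h5 : (0:ℝ) ≤ |u| * pker ε u := mul_nonneg (abs_nonneg u) hp.le
  have h6 : (0:ℝ) ≤ Real.sqrt (2 * ε) * A := by positivity
  nlinarith [h1, h5, h6]

lemma my_lintegral_sq_le {α : Type*} [MeasurableSpace α] (μ : Measure α) (f : α → ℝ≥0∞)
    (hf : AEMeasurable f μ) :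
    (∫⁻ x, f x ∂μ) ^ 2 ≤ μ univ * ∫⁻ x, (f x) ^ 2 ∂μ := by
  have hpq : (2:ℝ).HolderConjugate 2 := Real.HolderConjugate.two_two
  have h := ENNReal.lintegral_mul_le_Lp_mul_Lq μ hpq hf aemeasurable_const (g := fun _ => 1)
  simp only [Pi.mul_apply, mul_one, ENNReal.one_rpow, lintegral_const, one_mul] at h
  have h2 : (∫⁻ x, f x ∂μ) ^ 2
      ≤ ((∫⁻ a, f a ^ (2:ℝ) ∂μ) ^ (1/(2:ℝ)) * (μ univ) ^ (1/(2:ℝ))) ^ 2 :=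
    pow_le_pow_left' h 2
  calc (∫⁻ x, f x ∂μ) ^ 2 ≤ _ := h2
    _ = (∫⁻ a, f a ^ (2:ℝ) ∂μ) * μ univ := by
        rw [mul_pow, ← ENNReal.rpow_natCast (_ ^ (1/(2:ℝ))) 2,
          ← ENNReal.rpow_natCast ((μ univ) ^ (1/(2:ℝ))) 2, ← ENNReal.rpow_mul,
          ← ENNReal.rpow_mul]
        norm_num
    _ = μ univ * ∫⁻ x, (f x) ^ 2 ∂μ := by
        rw [mul_comm]
        congr 1
        refine lintegral_congr fun x => ?_
        rw [← ENNReal.rpow_natCast (f x) 2]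
        norm_num

set_option maxHeartbeats 1000000 in
/-- Lemma 5.4 (commutator bound): for `φ : [0,∞) → ℝ` Lipschitz with constant
`C_φ` there is a constant `C > 0`, depending only on `C_φ`, such that for every
finite signed Borel measure `Δ = μp - μn` on `[0,∞)` with total variation at most
`2`, the commutator
`c^{φ,ε}(x) = ∫₀^∞ φ(y) G_ε(x,y) dΔ(y) - φ(x) ∫₀^∞ G_ε(x,y) dΔ(y)`
satisfies `∫₀^∞ c^{φ,ε}(x)² dx ≤ C √ε` for all `ε > 0`. -/
theorem commutator_bound (Cφ : ℝ) (hCφ : 0 ≤ Cφ) :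
    ∃ C > (0 : ℝ), ∀ φ : ℝ → ℝ, LipschitzOnWith (Real.toNNReal Cφ) φ (Ici 0) →
      ∀ μp μn : Measure ℝ, IsFiniteMeasure μp → IsFiniteMeasure μn →
        μp (Iio 0) = 0 → μn (Iio 0) = 0 →
        μp univ + μn univ ≤ 2 →
        ∀ ε > (0 : ℝ),
          (∫ x in Ioi (0 : ℝ),
            ((∫ y, φ y * Gker ε x y ∂μp) - (∫ y, φ y * Gker ε x y ∂μn)
              - φ x * ((∫ y, Gker ε x y ∂μp) - (∫ y, Gker ε x y ∂μn))) ^ 2)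
          ≤ C * Real.sqrt ε := by
  classical
  refine ⟨32 * Cφ ^ 2 + 1, by positivity, ?_⟩
  intro φ hφ μp μn hμp hμn hp0 hn0 hmass ε hε
  haveI := hμp; haveI := hμn
  set A : ℝ := (Real.sqrt (2 * Real.pi * ε))⁻¹ with hA
  have hApos : 0 < A := by rw [hA]; have := cb_sqrt_pos hε; positivity
  set m : ℝ := Real.sqrt (2 * ε) * A with hm
  have hmpos : 0 < m := by rw [hm]; positivity
  -- the Lipschitz extension ψ of φ
  set ψ : ℝ → ℝ := fun y => φ (max y 0) with hψdef
  have hmax : LipschitzWith 1 (fun y : ℝ => max y 0) := LipschitzWith.id.max_const 0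
  have hψlip : LipschitzWith (Real.toNNReal Cφ) ψ := by
    have h2 : LipschitzOnWith (Real.toNNReal Cφ * 1) (φ ∘ fun y : ℝ => max y 0) univ :=
      hφ.comp (hmax.lipschitzOnWith (s := univ)) (fun y _ => le_max_right y 0)
    rw [mul_one] at h2
    exact lipschitzOnWith_univ.mp h2
  have hψc : Continuous ψ := hψlip.continuous
  have hψdist : ∀ a b : ℝ, |ψ a - ψ b| ≤ Cφ * |a - b| := by
    intro a b
    have h := hψlip.dist_le_mul a b
    rwa [Real.dist_eq, Real.dist_eq, Real.coe_toNNReal _ hCφ] at h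
  have hψeq : ∀ y : ℝ, 0 ≤ y → ψ y = φ y := by
    intro y hy; simp only [hψdef, max_eq_left hy]
  -- the total variation measure
  set ν : Measure ℝ := μp + μn with hν
  haveI : IsFiniteMeasure ν := by rw [hν]; infer_instance
  have hνuniv : ν univ ≤ 2 := by rw [hν, Measure.add_apply]; exact hmass
  have haemk : ∀ (μ : Measure ℝ), μ (Iio 0) = 0 → ∀ᵐ y ∂μ, 0 ≤ y := by
    intro μ hμ0
    rw [ae_iff]
    convert hμ0 using 2
    ext y; simp [not_le]
  -- the dominating kernel g
  set g : ℝ → ℝ → ℝ :=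
    fun x y => Cφ * (|x - y| * pker ε (x - y) + |x + y| * pker ε (x + y)) with hgdef
  have hg0 : ∀ x y, 0 ≤ g x y := by
    intro x y
    refine mul_nonneg hCφ ?_
    have := (pker_pos hε (x - y)).le
    have := (pker_pos hε (x + y)).le
    positivity
  have hgM : ∀ x y, g x y ≤ Cφ * (2 * m) := by
    intro x y
    have h1 := cb_abs_pker hε (x - y)
    have h2 := cb_abs_pker hε (x + y)
    rw [← hA, ← hm] at h1 h2
    refine mul_le_mul_of_nonneg_left (by linarith) hCφ
  have hgcont : Continuous (fun p : ℝ × ℝ => g p.1 p.2) := by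
    simp only [hgdef]
    unfold pker
    fun_prop
  have hgcont1 : ∀ x : ℝ, Continuous (fun y => g x y) := by
    intro x
    simp only [hgdef]
    unfold pker
    fun_prop
  have hGcont : Continuous (fun p : ℝ × ℝ => Gker ε p.1 p.2) := by
    unfold Gker pker; fun_prop
  have hGcont1 : ∀ x : ℝ, Continuous (fun y => Gker ε x y) := by
    intro x
    unfold Gker pker
    fun_prop
  have hGb : ∀ x y : ℝ, |Gker ε x y| ≤ 2 * A := by
    intro x y
    refine (abs_Gker_le hε x y).trans ?_
    have h1 := pker_le hε (x - y); have h2 := pker_le hε (x + y)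
    rw [← hA] at h1 h2; linarith
  -- the ψ-commutator
  set cψ : ℝ → ℝ := fun x =>
    (∫ y, ψ y * Gker ε x y ∂μp) - (∫ y, ψ y * Gker ε x y ∂μn)
      - ψ x * ((∫ y, Gker ε x y ∂μp) - (∫ y, Gker ε x y ∂μn)) with hcψdef
  -- Step A : replace φ by ψ in the goal
  have hgoalEq : (∫ x in Ioi (0 : ℝ),
      ((∫ y, φ y * Gker ε x y ∂μp) - (∫ y, φ y * Gker ε x y ∂μn)
        - φ x * ((∫ y, Gker ε x y ∂μp) - (∫ y, Gker ε x y ∂μn))) ^ 2)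
      = ∫ x in Ioi (0 : ℝ), (cψ x) ^ 2 := by
    refine setIntegral_congr_fun measurableSet_Ioi fun x hx => ?_
    have e1 : ∀ (μ : Measure ℝ), μ (Iio 0) = 0 →
        ∫ y, φ y * Gker ε x y ∂μ = ∫ y, ψ y * Gker ε x y ∂μ := by
      intro μ hμ0
      refine integral_congr_ae ?_
      filter_upwards [haemk μ hμ0] with y hy
      rw [hψeq y hy]
    simp only [hcψdef]
    rw [e1 μp hp0, e1 μn hn0, hψeq x (le_of_lt hx)]
  rw [hgoalEq]
  -- Step B : per-measure bound
  have hstep : ∀ (μ : Measure ℝ), IsFiniteMeasure μ → μ (Iio 0) = 0 → ∀ x : ℝ, 0 < x →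
      |(∫ y, ψ y * Gker ε x y ∂μ) - ψ x * ∫ y, Gker ε x y ∂μ|
        ≤ (∫⁻ y, ENNReal.ofReal (g x y) ∂μ).toReal := by
    intro μ hfin hμ0 x hx
    haveI := hfin
    have hae : ∀ᵐ y ∂μ, 0 ≤ y := haemk μ hμ0
    have i2 : Integrable (fun y => Gker ε x y) μ := by
      refine Integrable.mono' (integrable_const (2 * A)) (hGcont1 x).aestronglyMeasurable
        (Filter.Eventually.of_forall fun y => ?_)
      simpa [Real.norm_eq_abs] using hGb x y
    have i1 : Integrable (fun y => ψ y * Gker ε x y) μ := by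
      refine Integrable.mono' (integrable_const (2 * A * |ψ 0| + Cφ * (2 * m + 2 * (|x| * A))))
        ((hψc.mul (hGcont1 x)).aestronglyMeasurable) (Filter.Eventually.of_forall fun y => ?_)
      have hb1 : |ψ y| ≤ |ψ 0| + Cφ * |y| := by
        have h := hψdist y 0
        rw [sub_zero] at h
        have := abs_sub_abs_le_abs_sub (ψ y) (ψ 0)
        linarith
      have hp1 := pker_le hε (x - y); have hp2 := pker_le hε (x + y)
      rw [← hA] at hp1 hp2
      have hq1 := cb_abs_pker hε (x - y); have hq2 := cb_abs_pker hε (x + y)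
      rw [← hA, ← hm] at hq1 hq2
      have hpp1 := (pker_pos hε (x - y)).le
      have hpp2 := (pker_pos hε (x + y)).le
      have hy1 : |y| ≤ |x - y| + |x| := by
        have h := abs_sub (x) (x - y)
        have e : x - (x - y) = y := by ring
        rw [e] at h
        linarith [h, abs_sub_comm x (x-y)]
      have hy2 : |y| ≤ |x + y| + |x| := by
        have h := abs_sub (x + y) x
        have e : x + y - x = y := by ring
        rw [e] at h
        linarith
      have hG := abs_Gker_le hε x y
      have k1 : |y| * pker ε (x - y) ≤ m + |x| * A := by
        have t1 := mul_le_mul_of_nonneg_right hy1 hpp1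
        have t2 := mul_le_mul_of_nonneg_left hp1 (abs_nonneg x)
        nlinarith
      have k2 : |y| * pker ε (x + y) ≤ m + |x| * A := by
        have t1 := mul_le_mul_of_nonneg_right hy2 hpp2
        have t2 := mul_le_mul_of_nonneg_left hp2 (abs_nonneg x)
        nlinarith
      have k3 : pker ε (x - y) + pker ε (x + y) ≤ 2 * A := by linarith
      rw [Real.norm_eq_abs, abs_mul]
      calc |ψ y| * |Gker ε x y|
          ≤ (|ψ 0| + Cφ * |y|) * (pker ε (x - y) + pker ε (x + y)) := by
            refine mul_le_mul hb1 ((abs_Gker_le hε x y)) (abs_nonneg _) ?_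
            exact add_nonneg (abs_nonneg _) (mul_nonneg hCφ (abs_nonneg _))
        _ = |ψ 0| * (pker ε (x - y) + pker ε (x + y))
            + Cφ * (|y| * pker ε (x - y) + |y| * pker ε (x + y)) := by ring
        _ ≤ |ψ 0| * (2 * A) + Cφ * ((m + |x| * A) + (m + |x| * A)) := by
            refine add_le_add (mul_le_mul_of_nonneg_left k3 (abs_nonneg _)) ?_
            exact mul_le_mul_of_nonneg_left (add_le_add k1 k2) hCφ
        _ = 2 * A * |ψ 0| + Cφ * (2 * m + 2 * (|x| * A)) := by ring
    have i3 : Integrable (fun y => g x y) μ := by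
      refine Integrable.mono' (integrable_const (Cφ * (2 * m)))
        (hgcont1 x).aestronglyMeasurable (Filter.Eventually.of_forall fun y => ?_)
      rw [Real.norm_eq_abs, abs_of_nonneg (hg0 x y)]
      exact hgM x y
    have i2' : Integrable (fun y => ψ x * Gker ε x y) μ := i2.const_mul (ψ x)
    have i1' : Integrable (fun y => (ψ y - ψ x) * Gker ε x y) μ := by
      refine (i1.sub i2').congr (Filter.Eventually.of_forall fun y => ?_)
      simp only [Pi.sub_apply]
      ring
    have hid : (∫ y, ψ y * Gker ε x y ∂μ) - ψ x * ∫ y, Gker ε x y ∂μ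
        = ∫ y, (ψ y - ψ x) * Gker ε x y ∂μ := by
      rw [← MeasureTheory.integral_const_mul, ← integral_sub i1 i2']
      refine integral_congr_ae (Filter.Eventually.of_forall fun y => ?_)
      ring
    rw [hid]
    have hb : |∫ y, (ψ y - ψ x) * Gker ε x y ∂μ| ≤ ∫ y, g x y ∂μ := by
      refine le_trans (le_of_eq (Real.norm_eq_abs _).symm) ?_
      refine le_trans (norm_integral_le_integral_norm _) ?_
      refine integral_mono_ae i1'.norm i3 ?_
      filter_upwards [hae] with y hy
      rw [Real.norm_eq_abs]
      have h1 := hψdist y x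
      have hG := abs_Gker_le hε x y
      have hpp1 := (pker_pos hε (x - y)).le
      have hpp2 := (pker_pos hε (x + y)).le
      have hyx : |y - x| ≤ |x + y| := by
        rw [abs_of_nonneg (by linarith : (0:ℝ) ≤ x + y), abs_le]
        constructor <;> linarith
      have hyx2 : |y - x| = |x - y| := abs_sub_comm y x
      calc |(ψ y - ψ x) * Gker ε x y| = |ψ y - ψ x| * |Gker ε x y| := abs_mul _ _
        _ ≤ (Cφ * |y - x|) * (pker ε (x - y) + pker ε (x + y)) := by
            refine mul_le_mul h1 hG (abs_nonneg _) (mul_nonneg hCφ (abs_nonneg _))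
        _ ≤ g x y := by
            simp only [hgdef]
            rw [hyx2] at hyx ⊢
            have t1 : Cφ * |x - y| * pker ε (x + y) ≤ Cφ * |x + y| * pker ε (x + y) := by
              refine mul_le_mul_of_nonneg_right ?_ hpp2
              exact mul_le_mul_of_nonneg_left hyx hCφ
            nlinarith [t1]
    refine hb.trans (le_of_eq ?_)
    rw [integral_eq_lintegral_of_nonneg_ae (Filter.Eventually.of_forall (hg0 x))
      (hgcont1 x).aestronglyMeasurable]
  -- measurability of cψ
  have hψG_sm : StronglyMeasurable (fun p : ℝ × ℝ => ψ p.2 * Gker ε p.1 p.2) :=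
    ((hψc.comp continuous_snd).mul hGcont).stronglyMeasurable
  have hG_sm : StronglyMeasurable (fun p : ℝ × ℝ => Gker ε p.1 p.2) :=
    hGcont.stronglyMeasurable
  have hcψm : StronglyMeasurable cψ := by
    have m1 : StronglyMeasurable fun x => ∫ y, ψ y * Gker ε x y ∂μp :=
      hψG_sm.integral_prod_right'
    have m2 : StronglyMeasurable fun x => ∫ y, ψ y * Gker ε x y ∂μn :=
      hψG_sm.integral_prod_right'
    have m3 : StronglyMeasurable fun x => ∫ y, Gker ε x y ∂μp :=
      hG_sm.integral_prod_right'
    have m4 : StronglyMeasurable fun x => ∫ y, Gker ε x y ∂μn :=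
      hG_sm.integral_prod_right'
    exact (m1.sub m2).sub (hψc.stronglyMeasurable.mul (m3.sub m4))
  -- the ENNReal-valued kernel
  have hgm : Measurable (fun p : ℝ × ℝ => ENNReal.ofReal (g p.1 p.2)) :=
    ENNReal.measurable_ofReal.comp hgcont.measurable
  have hgm1 : ∀ x : ℝ, Measurable (fun y => ENNReal.ofReal (g x y)) := fun x =>
    ENNReal.measurable_ofReal.comp (hgcont1 x).measurable
  -- Step C : pointwise square bound
  have key : ∀ x ∈ Ioi (0:ℝ), ENNReal.ofReal (cψ x ^ 2)
      ≤ ν univ * ∫⁻ y, (ENNReal.ofReal (g x y)) ^ 2 ∂ν := by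
    intro x hx
    have hxpos : (0:ℝ) < x := hx
    have hJle : ∫⁻ y, ENNReal.ofReal (g x y) ∂ν ≤ ENNReal.ofReal (Cφ * (2 * m)) * ν univ := by
      calc ∫⁻ y, ENNReal.ofReal (g x y) ∂ν ≤ ∫⁻ _, ENNReal.ofReal (Cφ * (2 * m)) ∂ν :=
            lintegral_mono fun y => ENNReal.ofReal_le_ofReal (hgM x y)
        _ = ENNReal.ofReal (Cφ * (2 * m)) * ν univ := by rw [lintegral_const]
    have hJfin : ∫⁻ y, ENNReal.ofReal (g x y) ∂ν ≠ ⊤ :=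
      (hJle.trans_lt (ENNReal.mul_lt_top ENNReal.ofReal_lt_top (measure_lt_top ν univ))).ne
    have hsplit : ∫⁻ y, ENNReal.ofReal (g x y) ∂ν
        = (∫⁻ y, ENNReal.ofReal (g x y) ∂μp) + ∫⁻ y, ENNReal.ofReal (g x y) ∂μn := by
      rw [hν]; exact lintegral_add_measure _ _ _
    have hfinp : (∫⁻ y, ENNReal.ofReal (g x y) ∂μp) ≠ ⊤ := by
      refine ne_top_of_le_ne_top hJfin ?_
      rw [hsplit]; exact le_self_add
    have hfinn : (∫⁻ y, ENNReal.ofReal (g x y) ∂μn) ≠ ⊤ := by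
      refine ne_top_of_le_ne_top hJfin ?_
      rw [hsplit]; exact le_add_self
    have hbp := hstep μp hμp hp0 x hxpos
    have hbn := hstep μn hμn hn0 x hxpos
    have habs : |cψ x| ≤ (∫⁻ y, ENNReal.ofReal (g x y) ∂ν).toReal := by
      rw [hsplit, ENNReal.toReal_add hfinp hfinn]
      have hre : cψ x = ((∫ y, ψ y * Gker ε x y ∂μp) - ψ x * ∫ y, Gker ε x y ∂μp)
          - ((∫ y, ψ y * Gker ε x y ∂μn) - ψ x * ∫ y, Gker ε x y ∂μn) := by
        rw [hcψdef]; ring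
      rw [hre]
      refine (abs_sub _ _).trans ?_
      exact add_le_add hbp hbn
    have h2 : ENNReal.ofReal (cψ x ^ 2) ≤ (∫⁻ y, ENNReal.ofReal (g x y) ∂ν) ^ 2 := by
      have hsq : cψ x ^ 2 ≤ ((∫⁻ y, ENNReal.ofReal (g x y) ∂ν).toReal) ^ 2 := by
        rw [← sq_abs]
        exact pow_le_pow_left₀ (abs_nonneg _) habs 2
      calc ENNReal.ofReal (cψ x ^ 2)
          ≤ ENNReal.ofReal (((∫⁻ y, ENNReal.ofReal (g x y) ∂ν).toReal) ^ 2) :=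
            ENNReal.ofReal_le_ofReal hsq
        _ = (ENNReal.ofReal ((∫⁻ y, ENNReal.ofReal (g x y) ∂ν).toReal)) ^ 2 :=
            ENNReal.ofReal_pow ENNReal.toReal_nonneg 2
        _ = (∫⁻ y, ENNReal.ofReal (g x y) ∂ν) ^ 2 := by rw [ENNReal.ofReal_toReal hJfin]
    exact h2.trans (my_lintegral_sq_le ν _ (hgm1 x).aemeasurable)
  -- Step D-F : integrate in x
  have hlin : ∫⁻ x in Ioi (0:ℝ), ENNReal.ofReal (cψ x ^ 2)
      ≤ ENNReal.ofReal ((32 * Cφ ^ 2) * Real.sqrt ε) := by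
    have hFm : Measurable (fun p : ℝ × ℝ => (ENNReal.ofReal (g p.1 p.2)) ^ 2) :=
      hgm.pow_const 2
    have hKm : Measurable fun x => ∫⁻ y, (ENNReal.ofReal (g x y)) ^ 2 ∂ν :=
      Measurable.lintegral_prod_right (f := fun x y => (ENNReal.ofReal (g x y)) ^ 2) hFm
    have step1 : ∫⁻ x in Ioi (0:ℝ), ENNReal.ofReal (cψ x ^ 2)
        ≤ ∫⁻ x in Ioi (0:ℝ), ν univ * ∫⁻ y, (ENNReal.ofReal (g x y)) ^ 2 ∂ν :=
      lintegral_mono_ae ((ae_restrict_iff' measurableSet_Ioi).2 (Filter.Eventually.of_forall key))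
    have step2 : ∫⁻ x in Ioi (0:ℝ), ν univ * ∫⁻ y, (ENNReal.ofReal (g x y)) ^ 2 ∂ν
        = ν univ * ∫⁻ x in Ioi (0:ℝ), ∫⁻ y, (ENNReal.ofReal (g x y)) ^ 2 ∂ν :=
      lintegral_const_mul _ hKm
    have step3 : ∫⁻ x in Ioi (0:ℝ), ∫⁻ y, (ENNReal.ofReal (g x y)) ^ 2 ∂ν
        = ∫⁻ y, (∫⁻ x in Ioi (0:ℝ), (ENNReal.ofReal (g x y)) ^ 2) ∂ν :=
      lintegral_lintegral_swap (μ := volume.restrict (Ioi (0:ℝ))) (ν := ν)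
        (f := fun x y => (ENNReal.ofReal (g x y)) ^ 2) hFm.aemeasurable
    have hεA : ε * A ≤ Real.sqrt ε := by
      have h1 : Real.sqrt ε ≤ Real.sqrt (2 * Real.pi * ε) := by
        refine Real.sqrt_le_sqrt ?_
        nlinarith [Real.pi_gt_three, hε]
      have h2 : (0:ℝ) < Real.sqrt ε := Real.sqrt_pos.2 hε
      have h3 : A ≤ (Real.sqrt ε)⁻¹ := by
        rw [hA]
        exact inv_anti₀ h2 h1
      calc ε * A ≤ ε * (Real.sqrt ε)⁻¹ := mul_le_mul_of_nonneg_left h3 hε.le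
        _ = ε / Real.sqrt ε := by rw [div_eq_mul_inv]
        _ = Real.sqrt ε := by
            rw [← Real.sqrt_mul_self hε.le, Real.sqrt_mul_self hε.le]
            rw [Real.div_sqrt]
    have step4 : ∀ y : ℝ, ∫⁻ x in Ioi (0:ℝ), (ENNReal.ofReal (g x y)) ^ 2
        ≤ ENNReal.ofReal (8 * Cφ ^ 2 * Real.sqrt ε) := by
      intro y
      have hb : ∀ x, (g x y) ^ 2
          ≤ (4 * Cφ ^ 2 * (ε * A)) * (pker ε (x - y) + pker ε (x + y)) := by
        intro x
        have s1 := cb_sq_pker hε (x - y)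
        have s2 := cb_sq_pker hε (x + y)
        rw [← hA] at s1 s2
        have hpp1 := (pker_pos hε (x - y)).le
        have hpp2 := (pker_pos hε (x + y)).le
        have e1 : (|x - y| * pker ε (x - y)) ^ 2 = (x - y) ^ 2 * (pker ε (x - y)) ^ 2 := by
          rw [mul_pow, sq_abs]
        have e2 : (|x + y| * pker ε (x + y)) ^ 2 = (x + y) ^ 2 * (pker ε (x + y)) ^ 2 := by
          rw [mul_pow, sq_abs]
        have hsum : (|x - y| * pker ε (x - y) + |x + y| * pker ε (x + y)) ^ 2
            ≤ 2 * ((x - y) ^ 2 * (pker ε (x - y)) ^ 2 + (x + y) ^ 2 * (pker ε (x + y)) ^ 2) := by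
          nlinarith [sq_nonneg (|x - y| * pker ε (x - y) - |x + y| * pker ε (x + y)), e1, e2]
        have hCsq : (0:ℝ) ≤ Cφ ^ 2 := sq_nonneg Cφ
        calc (g x y) ^ 2
            = Cφ ^ 2 * (|x - y| * pker ε (x - y) + |x + y| * pker ε (x + y)) ^ 2 := by
              simp only [hgdef]; ring
          _ ≤ Cφ ^ 2 * (2 * ((x - y) ^ 2 * (pker ε (x - y)) ^ 2
                + (x + y) ^ 2 * (pker ε (x + y)) ^ 2)) :=
              mul_le_mul_of_nonneg_left hsum hCsq
          _ ≤ Cφ ^ 2 * (2 * (2 * ε * A * pker ε (x - y) + 2 * ε * A * pker ε (x + y))) := by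
              refine mul_le_mul_of_nonneg_left ?_ hCsq
              have := add_le_add s1 s2
              linarith
          _ = (4 * Cφ ^ 2 * (ε * A)) * (pker ε (x - y) + pker ε (x + y)) := by ring
      have hc0 : (0:ℝ) ≤ 4 * Cφ ^ 2 * (ε * A) := by positivity
      calc ∫⁻ x in Ioi (0:ℝ), (ENNReal.ofReal (g x y)) ^ 2
          = ∫⁻ x in Ioi (0:ℝ), ENNReal.ofReal ((g x y) ^ 2) := by
            refine lintegral_congr fun x => ?_
            rw [ENNReal.ofReal_pow (hg0 x y)]
        _ ≤ ∫⁻ x in Ioi (0:ℝ),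
              ENNReal.ofReal ((4 * Cφ ^ 2 * (ε * A)) * (pker ε (x - y) + pker ε (x + y))) :=
            lintegral_mono fun x => ENNReal.ofReal_le_ofReal (hb x)
        _ ≤ ∫⁻ x, ENNReal.ofReal ((4 * Cφ ^ 2 * (ε * A)) * (pker ε (x - y) + pker ε (x + y))) :=
            setLIntegral_le_lintegral _ _
        _ = ENNReal.ofReal (4 * Cφ ^ 2 * (ε * A))
              * ∫⁻ x, (ENNReal.ofReal (pker ε (x - y)) + ENNReal.ofReal (pker ε (x + y))) := by
            rw [← lintegral_const_mul' _ _ ENNReal.ofReal_ne_top]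
            refine lintegral_congr fun x => ?_
            rw [ENNReal.ofReal_mul hc0,
              ENNReal.ofReal_add (pker_pos hε (x - y)).le (pker_pos hε (x + y)).le]
        _ = ENNReal.ofReal (4 * Cφ ^ 2 * (ε * A)) * 2 := by
            congr 1
            have hm1 : Measurable fun x => ENNReal.ofReal (pker ε (x - y)) := by
              refine ENNReal.measurable_ofReal.comp ?_
              have : Continuous fun x : ℝ => pker ε (x - y) := by unfold pker; fun_prop
              exact this.measurable
            rw [lintegral_add_left hm1, lintegral_pker_sub hε, lintegral_pker_add hε]
            norm_num
        _ ≤ ENNReal.ofReal (8 * Cφ ^ 2 * Real.sqrt ε) := by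
            rw [ENNReal.ofReal_mul (by positivity : (0:ℝ) ≤ 8 * Cφ ^ 2)]
            rw [show (4 : ℝ) * Cφ ^ 2 * (ε * A) = (4 * Cφ ^ 2) * (ε * A) by ring,
              ENNReal.ofReal_mul (by positivity : (0:ℝ) ≤ 4 * Cφ ^ 2)]
            calc ENNReal.ofReal (4 * Cφ ^ 2) * ENNReal.ofReal (ε * A) * 2
                = ENNReal.ofReal (4 * Cφ ^ 2) * 2 * ENNReal.ofReal (ε * A) := by ring
              _ ≤ ENNReal.ofReal (8 * Cφ ^ 2) * ENNReal.ofReal (Real.sqrt ε) := by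
                  refine mul_le_mul' ?_ (ENNReal.ofReal_le_ofReal hεA)
                  rw [show (2 : ℝ≥0∞) = ENNReal.ofReal 2 by norm_num,
                    ← ENNReal.ofReal_mul (by positivity : (0:ℝ) ≤ 4 * Cφ ^ 2)]
                  exact ENNReal.ofReal_le_ofReal (by nlinarith)
    calc ∫⁻ x in Ioi (0:ℝ), ENNReal.ofReal (cψ x ^ 2)
        ≤ ν univ * ∫⁻ x in Ioi (0:ℝ), ∫⁻ y, (ENNReal.ofReal (g x y)) ^ 2 ∂ν :=
          step1.trans (le_of_eq step2)
      _ = ν univ * ∫⁻ y, (∫⁻ x in Ioi (0:ℝ), (ENNReal.ofReal (g x y)) ^ 2) ∂ν := by rw [step3]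
      _ ≤ ν univ * ∫⁻ _, ENNReal.ofReal (8 * Cφ ^ 2 * Real.sqrt ε) ∂ν :=
          mul_le_mul' le_rfl (lintegral_mono (μ := ν) fun y => step4 y)
      _ = ν univ * (ENNReal.ofReal (8 * Cφ ^ 2 * Real.sqrt ε) * ν univ) := by
          rw [lintegral_const]
      _ ≤ 2 * (ENNReal.ofReal (8 * Cφ ^ 2 * Real.sqrt ε) * 2) :=
          mul_le_mul' hνuniv (mul_le_mul' le_rfl hνuniv)
      _ = ENNReal.ofReal (8 * Cφ ^ 2 * Real.sqrt ε) * 4 := by ring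
      _ = ENNReal.ofReal ((32 * Cφ ^ 2) * Real.sqrt ε) := by
          rw [show (4 : ℝ≥0∞) = ENNReal.ofReal 4 by norm_num,
            ← ENNReal.ofReal_mul (by positivity : (0:ℝ) ≤ 8 * Cφ ^ 2 * Real.sqrt ε)]
          congr 1
          ring
  -- Step H : back to the Bochner integral
  have hconv : ∫ x in Ioi (0:ℝ), (cψ x) ^ 2
      = (∫⁻ x in Ioi (0:ℝ), ENNReal.ofReal (cψ x ^ 2)).toReal := by
    refine integral_eq_lintegral_of_nonneg_ae (Filter.Eventually.of_forall fun x => sq_nonneg _) ?_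
    exact ((hcψm.measurable.pow_const 2).aestronglyMeasurable)
  rw [hconv]
  calc (∫⁻ x in Ioi (0:ℝ), ENNReal.ofReal (cψ x ^ 2)).toReal
      ≤ (ENNReal.ofReal ((32 * Cφ ^ 2) * Real.sqrt ε)).toReal :=
        ENNReal.toReal_mono ENNReal.ofReal_ne_top hlin
    _ = (32 * Cφ ^ 2) * Real.sqrt ε := ENNReal.toReal_ofReal (by positivity)
    _ ≤ (32 * Cφ ^ 2 + 1) * Real.sqrt ε := by nlinarith [Real.sqrt_nonneg ε]
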